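/- At any interior critical point a of I₁ (in particular, at the cut-points of an SMML estimator that lies in the interior of its domain), the function x ↦ q(x) f(x|θ̂(x)) is continuous on the data space, i.e. for each j the one-sided limits agree: q_j f(a_j|θ̂_j) = q_{j-1} f(a_j|θ̂_{j-1}). -/

import Mathlib

open MeasureTheory Set

section SmmlAux
open Filter

lemma smml_aux_inv_deriv (μ dμ μinv : ℝ → ℝ)
    (hμ : ∀ θ, HasDerivAt μ (dμ θ) θ) (hdμpos : ∀ θ, 0 < dμ θ)
    (hinvr : ∀ y, μ (μinv y) = y) :
    ∀ y, HasDerivAt μinv (dμ (μinv y))⁻¹ y := by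
  have hmono : StrictMono μ := strictMono_of_deriv_pos fun x => by
    rw [(hμ x).deriv]; exact hdμpos x
  have hsurj : Function.Surjective μ := fun y => ⟨μinv y, hinvr y⟩
  have hcoe : μinv = (StrictMono.orderIsoOfSurjective μ hmono hsurj).symm := by
    funext y
    apply hmono.injective
    rw [hinvr]
    have := (StrictMono.orderIsoOfSurjective μ hmono hsurj).apply_symm_apply y
    rw [show ⇑(StrictMono.orderIsoOfSurjective μ hmono hsurj) = μ from
      StrictMono.coe_orderIsoOfSurjective μ hmono hsurj] at this
    exact this.symm
  have hcont : Continuous μinv := by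
    rw [hcoe]; exact (StrictMono.orderIsoOfSurjective μ hmono hsurj).symm.continuous
  intro y
  exact HasDerivAt.of_local_left_inverse hcont.continuousAt (hμ (μinv y))
    (ne_of_gt (hdμpos _)) (Eventually.of_forall hinvr)

lemma smml_aux_key_deriv (ψ μ dμ μinv : ℝ → ℝ)
    (hψ : ∀ θ, HasDerivAt ψ (μ θ) θ)
    (hμinv' : ∀ y, HasDerivAt μinv (dμ (μinv y))⁻¹ y)
    (hinvr : ∀ y, μ (μinv y) = y)
    (q m : ℝ → ℝ) (q' m' s : ℝ)
    (hq : HasDerivAt q q' s) (hm : HasDerivAt m m' s) (hq0 : q s ≠ 0) :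
    HasDerivAt (fun t => q t * (Real.log (q t) +
        μinv (m t / q t) * μ (μinv (m t / q t)) - ψ (μinv (m t / q t))))
      (q' * (Real.log (q s) + 1 - ψ (μinv (m s / q s))) + m' * μinv (m s / q s)) s := by
  have hdiv : HasDerivAt (fun t => m t / q t) ((m' * q s - m s * q') / (q s) ^ 2) s :=
    hm.div hq hq0
  set d : ℝ := (m' * q s - m s * q') / (q s) ^ 2 with hd
  have hθ : HasDerivAt (fun t => μinv (m t / q t)) ((dμ (μinv (m s / q s)))⁻¹ * d) s :=
    (hμinv' (m s / q s)).comp s hdiv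
  set θ' : ℝ := (dμ (μinv (m s / q s)))⁻¹ * d with hθ'
  have hψθ : HasDerivAt (fun t => ψ (μinv (m t / q t)))
      (μ (μinv (m s / q s)) * θ') s := (hψ (μinv (m s / q s))).comp s hθ
  have hG : HasDerivAt (fun t => q t * Real.log (q t) + m t * μinv (m t / q t)
        - q t * ψ (μinv (m t / q t)))
      ((q' * Real.log (q s) + q s * (q' / q s)) + (m' * μinv (m s / q s) + m s * θ')
        - (q' * ψ (μinv (m s / q s)) + q s * (μ (μinv (m s / q s)) * θ'))) s :=
    ((hq.mul (hq.log hq0)).add (hm.mul hθ)).sub (hq.mul hψθ)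
  have heq : (fun t => q t * (Real.log (q t) +
        μinv (m t / q t) * μ (μinv (m t / q t)) - ψ (μinv (m t / q t))))
      =ᶠ[nhds s] (fun t => q t * Real.log (q t) + m t * μinv (m t / q t)
        - q t * ψ (μinv (m t / q t))) := by
    filter_upwards [hq.continuousAt.eventually_ne hq0] with t ht
    rw [hinvr]
    field_simp
  have := hG.congr_of_eventuallyEq heq
  refine HasDerivAt.congr_deriv this ?_
  have h1 : μ (μinv (m s / q s)) = m s / q s := hinvr _
  rw [h1]
  field_simp
  ring

lemma smml_aux_R_deriv (r : ℝ → ℝ) (hr : Continuous r) (hint : Integrable r)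
    (R : ℝ → ℝ) (hR : ∀ x, R x = ∫ t in Iic x, r t) : ∀ x, HasDerivAt R (r x) x := by
  have key : R = fun y => R 0 + ∫ t in (0:ℝ)..y, r t := by
    funext y
    have := intervalIntegral.integral_Iic_sub_Iic (μ := volume) (f := r) (a := (0:ℝ)) (b := y)
      hint.integrableOn hint.integrableOn
    rw [hR, hR] at *
    linarith
  intro x
  rw [key]
  exact (intervalIntegral.integral_hasDerivAt_right hint.intervalIntegrable
    (hr.stronglyMeasurableAtFilter _ _) hr.continuousAt).const_add _

lemma smml_aux_R_pos (r : ℝ → ℝ) (hr : Continuous r) (hrpos : ∀ x, 0 < r x)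
    (hint : Integrable r) (R : ℝ → ℝ) (hR : ∀ x, R x = ∫ t in Iic x, r t) :
    (∀ x, 0 < R x) ∧ (∀ x, R x < ∫ t, r t) ∧ (∀ x y, x < y → R x < R y) := by
  have hsupp : Function.support r = univ := by
    ext t; simp [Function.support, (hrpos t).ne']
  refine ⟨?_, ?_, ?_⟩
  · intro x
    rw [hR]
    rw [setIntegral_pos_iff_support_of_nonneg_ae (Eventually.of_forall fun t => (hrpos t).le)
      hint.integrableOn]
    rw [hsupp, univ_inter, Real.volume_Iic]
    exact by simp
  · intro x
    have hsplit := intervalIntegral.integral_Iic_add_Ioi (f := r) (b := x)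
      hint.integrableOn hint.integrableOn
    have hpos : 0 < ∫ t in Ioi x, r t := by
      rw [setIntegral_pos_iff_support_of_nonneg_ae (Eventually.of_forall fun t => (hrpos t).le)
        hint.integrableOn]
      rw [hsupp, univ_inter, Real.volume_Ioi]
      simp
    rw [hR]; linarith
  · intro x y hxy
    have := intervalIntegral.integral_Iic_sub_Iic (μ := volume) (f := r) (a := x) (b := y)
      hint.integrableOn hint.integrableOn
    have hpos : 0 < ∫ t in x..y, r t :=
      intervalIntegral.intervalIntegral_pos_of_pos hint.intervalIntegrable hrpos hxy
    rw [hR, hR]; linarith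

end SmmlAux

/-- Corollary 1: at any interior critical point `a` of `I₁` (in particular at the cut-points
of an SMML estimator), the posterior `x ↦ q(x) f(x|θ̂(x))` is continuous: for each `j` the
one-sided limits agree, `q_j f(a_j|θ̂_j) = q_{j-1} f(a_j|θ̂_{j-1})`. -/
theorem smml_posterior_continuous_at_critical_point
    (n : ℕ) (hn : 1 ≤ n)
    (r : ℝ → ℝ) (hr : Continuous r) (hrpos : ∀ x, 0 < r x)
    (hint : Integrable r) (hnorm : ∫ x, r x = 1)
    (hint1 : Integrable (fun x => x * r x))
    (ψ μ dμ : ℝ → ℝ) (hψ : ∀ θ, HasDerivAt ψ (μ θ) θ)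
    (hμ : ∀ θ, HasDerivAt μ (dμ θ) θ) (hdμcont : Continuous dμ) (hdμpos : ∀ θ, 0 < dμ θ)
    (μinv : ℝ → ℝ) (hinvl : ∀ θ, μinv (μ θ) = θ) (hinvr : ∀ y, μ (μinv y) = y)
    (h : ℝ → ℝ) (hh : ∀ x, 0 < h x) (hhcont : Continuous h)
    (hinth : Integrable (fun x => r x * Real.log (h x)))
    (F : ℝ → ℝ → ℝ) (hF : ∀ x θ, F x θ = Real.exp (x * θ - ψ θ) * h x)
    (C : ℝ) (hC : C = -∫ x, r x * Real.log (h x))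
    (R : ℝ → ℝ) (hR : ∀ x, R x = ∫ t in Iic x, r t)
    (Q : (ℕ → ℝ) → ℕ → ℝ)
    (hQ : ∀ b i, Q b i = (if i = n then 1 else R (b (i + 1))) - (if i = 0 then 0 else R (b i)))
    (M : (ℕ → ℝ) → ℕ → ℝ)
    (hM : ∀ b i, M b i =
      (if i = n then ∫ t, t * r t else ∫ t in Iic (b (i + 1)), t * r t) -
      (if i = 0 then 0 else ∫ t in Iic (b i), t * r t))
    (TH : (ℕ → ℝ) → ℕ → ℝ) (hTH : ∀ b i, TH b i = μinv (M b i / Q b i))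
    (I1 : (ℕ → ℝ) → ℝ)
    (hI1 : ∀ b, I1 b = C - ∑ i ∈ Finset.range (n + 1),
      Q b i * (Real.log (Q b i) + TH b i * μ (TH b i) - ψ (TH b i)))
    (a : ℕ → ℝ) (ha : ∀ i j, 1 ≤ i → i < j → j ≤ n → a i < a j)
    (hcrit : ∀ j, 1 ≤ j → j ≤ n →
      HasDerivAt (fun t => I1 (Function.update a j t)) 0 (a j)) :
    ∀ j, 1 ≤ j → j ≤ n →
      Q a j * F (a j) (TH a j) = Q a (j - 1) * F (a j) (TH a (j - 1)) := by
  intro j hj1 hj2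
  have hμinv' := smml_aux_inv_deriv μ dμ μinv hμ hdμpos hinvr
  have hR' := smml_aux_R_deriv r hr hint R hR
  obtain ⟨hR0, hR1', hRmono⟩ := smml_aux_R_pos r hr hrpos hint R hR
  rw [hnorm] at hR1'
  have hM' : ∀ x, HasDerivAt (fun y => ∫ t in Iic y, t * r t) (x * r x) x :=
    smml_aux_R_deriv (fun t => t * r t) (continuous_id.mul hr) hint1 _ (fun _ => rfl)
  have hQpos : ∀ i, i ≤ n → 0 < Q a i := by
    intro i hi
    rw [hQ]
    by_cases h0 : i = 0
    · rw [if_neg (by omega), if_pos h0]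
      have := hR0 (a (i + 1)); linarith
    · by_cases hn' : i = n
      · rw [if_pos hn', if_neg h0]
        have := hR1' (a i); linarith
      · rw [if_neg hn', if_neg h0]
        have := hRmono (a i) (a (i + 1)) (ha i (i + 1) (by omega) (by omega) (by omega))
        linarith
  have hj1n : j - 1 ≠ n := by omega
  have hjne : j ≠ 0 := by omega
  -- explicit formulas for the two varying indices
  have e1q : (fun t => Q (Function.update a j t) (j - 1)) =
      fun t => R t - (if j - 1 = 0 then 0 else R (a (j - 1))) := by
    funext t
    have hb1 : Function.update a j t ((j - 1) + 1) = t := by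
      rw [show (j - 1) + 1 = j from by omega]; exact Function.update_self j t a
    have hb2 : Function.update a j t (j - 1) = a (j - 1) := Function.update_of_ne (by omega) t a
    rw [hQ, if_neg hj1n, hb1, hb2]
  have e1m : (fun t => M (Function.update a j t) (j - 1)) =
      fun t => (∫ u in Iic t, u * r u) -
        (if j - 1 = 0 then 0 else ∫ u in Iic (a (j - 1)), u * r u) := by
    funext t
    have hb1 : Function.update a j t ((j - 1) + 1) = t := by
      rw [show (j - 1) + 1 = j from by omega]; exact Function.update_self j t a
    have hb2 : Function.update a j t (j - 1) = a (j - 1) := Function.update_of_ne (by omega) t a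
    rw [hM, if_neg hj1n, hb1, hb2]
  have e2q : (fun t => Q (Function.update a j t) j) =
      fun t => (if j = n then 1 else R (a (j + 1))) - R t := by
    funext t
    have hb1 : Function.update a j t (j + 1) = a (j + 1) := Function.update_of_ne (by omega) t a
    have hb2 : Function.update a j t j = t := Function.update_self j t a
    rw [hQ, hb1, hb2, if_neg hjne]
  have e2m : (fun t => M (Function.update a j t) j) =
      fun t => (if j = n then ∫ u, u * r u else ∫ u in Iic (a (j + 1)), u * r u) -
        ∫ u in Iic t, u * r u := by
    funext t
    have hb1 : Function.update a j t (j + 1) = a (j + 1) := Function.update_of_ne (by omega) t a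
    have hb2 : Function.update a j t j = t := Function.update_self j t a
    rw [hM, hb1, hb2, if_neg hjne]
  set g : ℕ → ℝ := fun i =>
    if i = j - 1 then
      r (a j) * (Real.log (Q a (j - 1)) + 1 - ψ (TH a (j - 1))) + a j * r (a j) * TH a (j - 1)
    else if i = j then
      -(r (a j)) * (Real.log (Q a j) + 1 - ψ (TH a j)) + -(a j * r (a j)) * TH a j
    else 0 with hg
  have hterm : ∀ i ∈ Finset.range (n + 1),
      HasDerivAt (fun t => Q (Function.update a j t) i *
        (Real.log (Q (Function.update a j t) i) +
          TH (Function.update a j t) i * μ (TH (Function.update a j t) i) -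
          ψ (TH (Function.update a j t) i))) (g i) (a j) := by
    intro i hi
    simp only [Finset.mem_range] at hi
    have hgj1 : g (j - 1) = r (a j) * (Real.log (Q a (j - 1)) + 1 - ψ (TH a (j - 1))) +
        a j * r (a j) * TH a (j - 1) := by
      simp [hg]
    have hgj : g j = -(r (a j)) * (Real.log (Q a j) + 1 - ψ (TH a j)) +
        -(a j * r (a j)) * TH a j := by
      have hne : j ≠ j - 1 := by omega
      simp [hg, hne]
    by_cases h1 : i = j - 1
    · rw [h1, hgj1]
      have hq : HasDerivAt (fun t => Q (Function.update a j t) (j - 1)) (r (a j)) (a j) := by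
        rw [e1q]; exact (hR' (a j)).sub_const _
      have hm : HasDerivAt (fun t => M (Function.update a j t) (j - 1)) (a j * r (a j)) (a j) := by
        rw [e1m]; exact (hM' (a j)).sub_const _
      have hq0 : Q (Function.update a j (a j)) (j - 1) ≠ 0 := by
        rw [Function.update_eq_self]; exact (hQpos (j - 1) (by omega)).ne'
      have key := smml_aux_key_deriv ψ μ dμ μinv hψ hμinv' hinvr _ _ _ _ _ hq hm hq0
      simp only [Function.update_eq_self] at key
      simp only [hTH]
      exact key
    · by_cases h2 : i = j
      · rw [h2, hgj]
        have hq : HasDerivAt (fun t => Q (Function.update a j t) j) (-(r (a j))) (a j) := by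
          rw [e2q]
          exact HasDerivAt.const_sub _ (hR' (a j))
        have hm : HasDerivAt (fun t => M (Function.update a j t) j) (-(a j * r (a j))) (a j) := by
          rw [e2m]
          exact HasDerivAt.const_sub _ (hM' (a j))
        have hq0 : Q (Function.update a j (a j)) j ≠ 0 := by
          rw [Function.update_eq_self]; exact (hQpos j hj2).ne'
        have key := smml_aux_key_deriv ψ μ dμ μinv hψ hμinv' hinvr _ _ _ _ _ hq hm hq0
        simp only [Function.update_eq_self] at key
        simp only [hTH]
        exact key
      · have Qe : ∀ t, Q (Function.update a j t) i = Q a i := by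
          intro t
          have u1 : Function.update a j t (i + 1) = a (i + 1) :=
            Function.update_of_ne (by omega) t a
          have u2 : Function.update a j t i = a i := Function.update_of_ne (by omega) t a
          rw [hQ, u1, u2, ← hQ]
        have Me : ∀ t, M (Function.update a j t) i = M a i := by
          intro t
          have u1 : Function.update a j t (i + 1) = a (i + 1) :=
            Function.update_of_ne (by omega) t a
          have u2 : Function.update a j t i = a i := Function.update_of_ne (by omega) t a
          rw [hM, u1, u2, ← hM]
        have THe : ∀ t, TH (Function.update a j t) i = TH a i := by
          intro t; rw [hTH, Qe, Me, ← hTH]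
        have hconst : (fun t => Q (Function.update a j t) i *
            (Real.log (Q (Function.update a j t) i) +
              TH (Function.update a j t) i * μ (TH (Function.update a j t) i) -
              ψ (TH (Function.update a j t) i))) =
            fun _ => Q a i * (Real.log (Q a i) + TH a i * μ (TH a i) - ψ (TH a i)) :=
          funext fun t => by rw [Qe, THe]
        rw [hconst, show g i = 0 from by simp [hg, h1, h2]]
        exact hasDerivAt_const _ _
  have hI1deriv : HasDerivAt (fun t => I1 (Function.update a j t))
      (-(∑ i ∈ Finset.range (n + 1), g i)) (a j) := by
    have hfun : (fun t => I1 (Function.update a j t)) =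
        fun t => C - ∑ i ∈ Finset.range (n + 1), Q (Function.update a j t) i *
          (Real.log (Q (Function.update a j t) i) +
            TH (Function.update a j t) i * μ (TH (Function.update a j t) i) -
            ψ (TH (Function.update a j t) i)) := funext fun t => hI1 _
    rw [hfun]
    exact (HasDerivAt.fun_sum hterm).const_sub C
  have h0 : -(∑ i ∈ Finset.range (n + 1), g i) = 0 := hI1deriv.unique (hcrit j hj1 hj2)
  have hsum2 : ∑ i ∈ Finset.range (n + 1), g i = g (j - 1) + g j := by
    rw [← Finset.sum_pair (show j - 1 ≠ j by omega)]
    symm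
    apply Finset.sum_subset
    · intro x hx
      simp only [Finset.mem_insert, Finset.mem_singleton] at hx
      simp only [Finset.mem_range]; omega
    · intro x _ hnx
      simp only [Finset.mem_insert, Finset.mem_singleton] at hnx
      push_neg at hnx
      simp [hg, hnx.1, hnx.2]
  have gj1 : g (j - 1) =
      r (a j) * (Real.log (Q a (j - 1)) + 1 - ψ (TH a (j - 1))) + a j * r (a j) * TH a (j - 1) := by
    simp [hg]
  have gj : g j =
      -(r (a j)) * (Real.log (Q a j) + 1 - ψ (TH a j)) + -(a j * r (a j)) * TH a j := by
    have hne : j ≠ j - 1 := by omega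
    simp [hg, hne]
  have hrne : r (a j) ≠ 0 := (hrpos (a j)).ne'
  have hkey : Real.log (Q a (j - 1)) + a j * TH a (j - 1) - ψ (TH a (j - 1)) =
      Real.log (Q a j) + a j * TH a j - ψ (TH a j) := by
    have hs0 : g (j - 1) + g j = 0 := by
      rw [hsum2] at h0; linarith
    rw [gj1, gj] at hs0
    have h2 : r (a j) * ((Real.log (Q a (j - 1)) + a j * TH a (j - 1) - ψ (TH a (j - 1))) -
        (Real.log (Q a j) + a j * TH a j - ψ (TH a j))) = 0 := by linear_combination hs0
    rcases mul_eq_zero.mp h2 with hh' | hh'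
    · exact absurd hh' hrne
    · linarith
  have hQj := hQpos j hj2
  have hQj1 := hQpos (j - 1) (by omega)
  rw [hF, hF]
  have expand : ∀ (Qv θv : ℝ), 0 < Qv →
      Qv * (Real.exp (a j * θv - ψ θv) * h (a j)) =
        Real.exp (Real.log Qv + a j * θv - ψ θv) * h (a j) := by
    intro Qv θv hQv
    rw [show Real.log Qv + a j * θv - ψ θv = Real.log Qv + (a j * θv - ψ θv) by ring,
      Real.exp_add, Real.exp_log hQv]
    ring
  rw [expand _ _ hQj, expand _ _ hQj1, hkey]
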